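/- There exists a unique strictly increasing bijection h : [0, ∞) → [0, 1) such that h(x + 1) = (1 + h(x))/2 and h(x/(x + 1)) = h(x)/2 for all x ≥ 0; moreover this h is a homeomorphism from [0, ∞) onto [0, 1) and satisfies h(0) = 0. -/

import Mathlib

open Set

/-- The property of being a strictly increasing bijection from `[0,∞)` to `[0,1)`
conjugating the pair `x ↦ x+1`, `x ↦ x/(x+1)` to the pair `t ↦ (1+t)/2`, `t ↦ t/2`. -/
def MinkowskiLike (h : Set.Ici (0:ℝ) → Set.Ico (0:ℝ) 1) : Prop :=
  StrictMono h ∧ Function.Bijective h ∧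
  (∀ (x : ℝ) (hx : 0 ≤ x),
    (h ⟨x + 1, Set.mem_Ici.mpr (by linarith)⟩ : ℝ) = (1 + (h ⟨x, Set.mem_Ici.mpr hx⟩ : ℝ)) / 2 ∧
    (h ⟨x / (x + 1), Set.mem_Ici.mpr (div_nonneg hx (by linarith))⟩ : ℝ) =
      (h ⟨x, Set.mem_Ici.mpr hx⟩ : ℝ) / 2)

noncomputable section
namespace MQM

/-- shift map on [0,∞) -/
def T (x : ℝ) : ℝ := if 1 ≤ x then x - 1 else x / (1 - x)

/-- n-th binary digit of x (as a real 0 or 1) -/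
def D (x : ℝ) (n : ℕ) : ℝ := if 1 ≤ T^[n] x then 1 else 0

/-- Minkowski question mark function on [0,∞) -/
def H (x : ℝ) : ℝ := ∑' n, D x n / 2 ^ (n + 1)

/-- doubling map on [0,1) -/
def S (t : ℝ) : ℝ := if 1 / 2 ≤ t then 2 * t - 1 else 2 * t

/-- n-th binary digit of t ∈ [0,1) -/
def E (t : ℝ) (n : ℕ) : ℝ := if 1 / 2 ≤ S^[n] t then 1 else 0

lemma T_of_ge {x : ℝ} (h : 1 ≤ x) : T x = x - 1 := if_pos h
lemma T_of_lt {x : ℝ} (h : ¬ 1 ≤ x) : T x = x / (1 - x) := if_neg h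

lemma T_nonneg {x : ℝ} (hx : 0 ≤ x) : 0 ≤ T x := by
  unfold T; split_ifs with h
  · linarith
  · exact div_nonneg hx (by linarith)

lemma iter_nonneg {x : ℝ} (hx : 0 ≤ x) (n : ℕ) : 0 ≤ T^[n] x := by
  induction n with
  | zero => simpa
  | succ n ih => rw [Function.iterate_succ_apply']; exact T_nonneg ih

lemma T_add_one {x : ℝ} (hx : 0 ≤ x) : T (x + 1) = x := by
  unfold T; rw [if_pos (by linarith)]; ring

lemma T_div {x : ℝ} (hx : 0 ≤ x) : T (x / (x + 1)) = x := by
  have hx1 : (0:ℝ) < x + 1 := by linarith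
  have h1 : x / (x + 1) < 1 := (div_lt_one hx1).mpr (by linarith)
  unfold T; rw [if_neg (by linarith)]
  have hne : (x:ℝ) + 1 ≠ 0 := by linarith
  field_simp; ring

lemma D_add_one_zero {x : ℝ} (hx : 0 ≤ x) : D (x + 1) 0 = 1 := by
  unfold D; rw [Function.iterate_zero_apply]; rw [if_pos (by linarith)]

lemma D_add_one_succ {x : ℝ} (hx : 0 ≤ x) (n : ℕ) : D (x + 1) (n + 1) = D x n := by
  unfold D
  rw [Function.iterate_succ_apply, T_add_one hx]

lemma div_lt_one' {x : ℝ} (hx : 0 ≤ x) : x / (x + 1) < 1 :=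
  (div_lt_one (by linarith)).mpr (by linarith)

lemma D_div_zero {x : ℝ} (hx : 0 ≤ x) : D (x / (x + 1)) 0 = 0 := by
  unfold D; rw [Function.iterate_zero_apply]
  rw [if_neg (not_le.mpr (by linarith [div_lt_one' hx]))]

lemma D_div_succ {x : ℝ} (hx : 0 ≤ x) (n : ℕ) : D (x / (x + 1)) (n + 1) = D x n := by
  unfold D; rw [Function.iterate_succ_apply, T_div hx]

lemma D_nonneg (x : ℝ) (n : ℕ) : 0 ≤ D x n := by unfold D; split_ifs <;> norm_num

lemma D_le_one (x : ℝ) (n : ℕ) : D x n ≤ 1 := by unfold D; split_ifs <;> norm_num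

lemma summable_geo_one : Summable (fun n : ℕ => ((1:ℝ)/2) ^ (n + 1)) := by
  have := summable_geometric_two.mul_right ((1:ℝ)/2)
  refine this.congr fun n => ?_
  rw [pow_succ]

lemma two_pow_pos (n : ℕ) : (0:ℝ) < 2 ^ n := by positivity

lemma summable_D (x : ℝ) : Summable (fun n => D x n / 2 ^ (n + 1)) := by
  have h1 : ∀ n : ℕ, 0 ≤ D x n / 2 ^ (n + 1) :=
    fun n => div_nonneg (D_nonneg x n) (two_pow_pos (n+1)).le
  have h2 : ∀ n : ℕ, D x n / 2 ^ (n + 1) ≤ ((1:ℝ)/2) ^ (n + 1) := by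
    intro n
    calc D x n / 2 ^ (n + 1) ≤ 1 / 2 ^ (n + 1) := by
          gcongr <;> exact D_le_one x n
      _ = ((1:ℝ)/2) ^ (n + 1) := by rw [div_pow, one_pow]
  exact Summable.of_nonneg_of_le h1 h2 summable_geo_one

lemma H_add_one {x : ℝ} (hx : 0 ≤ x) : H (x + 1) = (1 + H x) / 2 := by
  unfold H
  rw [Summable.tsum_eq_zero_add (summable_D _)]
  have h0 : D (x+1) 0 / 2 ^ (0+1) = 1/2 := by rw [D_add_one_zero hx]; norm_num
  have hs : ∀ n : ℕ, D (x+1) (n+1) / 2 ^ (n+1+1) = (D x n / 2 ^ (n+1)) * (1/2) := by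
    intro n; rw [D_add_one_succ hx]; ring
  rw [h0]
  rw [tsum_congr hs, tsum_mul_right]
  ring

lemma H_div {x : ℝ} (hx : 0 ≤ x) : H (x / (x + 1)) = H x / 2 := by
  unfold H
  rw [Summable.tsum_eq_zero_add (summable_D _)]
  have h0 : D (x/(x+1)) 0 / 2 ^ (0+1) = 0 := by rw [D_div_zero hx]; ring
  have hs : ∀ n : ℕ, D (x/(x+1)) (n+1) / 2 ^ (n+1+1) = (D x n / 2 ^ (n+1)) * (1/2) := by
    intro n; rw [D_div_succ hx]; ring
  rw [h0, tsum_congr hs, tsum_mul_right]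
  ring

lemma T_iter_zero (n : ℕ) : T^[n] (0:ℝ) = 0 := by
  induction n with
  | zero => simp
  | succ n ih =>
    rw [Function.iterate_succ_apply', ih]
    unfold T; rw [if_neg (by norm_num)]; norm_num

lemma H_zero : H 0 = 0 := by
  unfold H
  have : ∀ n : ℕ, D 0 n / 2 ^ (n+1) = 0 := by
    intro n; unfold D; rw [T_iter_zero, if_neg (by norm_num)]; ring
  rw [tsum_congr this, tsum_zero]

/-- there are infinitely many zero digits -/
lemma exists_digit_zero {x : ℝ} (hx : 0 ≤ x) (N : ℕ) : ∃ n, N ≤ n ∧ T^[n] x < 1 := by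
  by_contra hcon
  push_neg at hcon
  have key : ∀ k : ℕ, T^[N + k] x = T^[N] x - k := by
    intro k
    induction k with
    | zero => simp
    | succ k ih =>
      have h1 : 1 ≤ T^[N + k] x := hcon _ (Nat.le_add_right _ _)
      have h2 : T^[N + (k+1)] x = T (T^[N + k] x) := by
        rw [← Nat.add_assoc, Function.iterate_succ_apply']
      rw [h2, T_of_ge h1, ih]
      push_cast; ring
  obtain ⟨k, hk⟩ := exists_nat_gt (T^[N] x)
  have h1 : 1 ≤ T^[N + k] x := hcon _ (Nat.le_add_right _ _)
  rw [key k] at h1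
  linarith

lemma T_branch_eq {x : ℝ} (n : ℕ) : (D x n = 1 ↔ 1 ≤ T^[n] x) ∧ (D x n = 0 ↔ ¬ 1 ≤ T^[n] x) := by
  unfold D; constructor <;> split_ifs with h <;> simp [h]

lemma branch_iff {x y : ℝ} {n : ℕ} (h : D x n = D y n) : 1 ≤ T^[n] x ↔ 1 ≤ T^[n] y := by
  by_cases h1 : 1 ≤ T^[n] x <;> by_cases h2 : 1 ≤ T^[n] y
  · exact iff_of_true h1 h2
  · exfalso; unfold D at h; rw [if_pos h1, if_neg h2] at h; norm_num at h
  · exfalso; unfold D at h; rw [if_neg h1, if_pos h2] at h; norm_num at h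
  · exact iff_of_false h1 h2

lemma T_lt_T {x y : ℝ} (hx : 0 ≤ x) (hxy : x < y) (hb : 1 ≤ x ↔ 1 ≤ y) : T x < T y := by
  by_cases h1 : 1 ≤ x
  · rw [T_of_ge h1, T_of_ge (hb.mp h1)]; linarith
  · have h2 : ¬ 1 ≤ y := fun h => h1 (hb.mpr h)
    rw [T_of_lt h1, T_of_lt h2]
    push_neg at h1 h2
    rw [div_lt_div_iff₀ (by linarith) (by linarith)]
    nlinarith

lemma T_gap {x y : ℝ} (hx : 0 ≤ x) (hxy : x < y) (hb : 1 ≤ x ↔ 1 ≤ y) :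
    y - x ≤ T y - T x := by
  by_cases h1 : 1 ≤ x
  · rw [T_of_ge h1, T_of_ge (hb.mp h1)]; linarith
  · have h2 : ¬ 1 ≤ y := fun h => h1 (hb.mpr h)
    rw [T_of_lt h1, T_of_lt h2]
    push_neg at h1 h2
    have h1x : 0 < 1 - x := by linarith
    have h1y : 0 < 1 - y := by linarith
    have heq : y / (1 - y) - x / (1 - x) = (y - x) / ((1 - x) * (1 - y)) := by
      field_simp; ring
    rw [heq, le_div_iff₀ (by positivity)]
    have hd : (0:ℝ) ≤ y - x := by linarith
    have hle : (1 - x) * (1 - y) ≤ 1 := by nlinarith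
    nlinarith [mul_le_mul_of_nonneg_left hle hd]

lemma T_gap_zero {x y : ℝ} (hx : 0 ≤ x) (hxy : x < y) (hy : y < 1) :
    (T y - T x)⁻¹ ≤ (y - x)⁻¹ - 1 := by
  have hx1 : x < 1 := hxy.trans hy
  rw [T_of_lt (not_le.mpr hy), T_of_lt (not_le.mpr hx1)]
  have h1x : 0 < 1 - x := by linarith
  have h1y : 0 < 1 - y := by linarith
  have hd : 0 < y - x := by linarith
  have heq : y / (1 - y) - x / (1 - x) = (y - x) / ((1 - x) * (1 - y)) := by
    field_simp; ring
  rw [heq, inv_div]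
  have hr : (y - x)⁻¹ - 1 = (1 - (y - x)) / (y - x) := by field_simp
  rw [hr, div_le_div_iff_of_pos_right hd]
  nlinarith

lemma iter_lt_iter {x y : ℝ} (hx : 0 ≤ x) (hxy : x < y) (n : ℕ)
    (hagree : ∀ m, m < n → D x m = D y m) : T^[n] x < T^[n] y := by
  induction n with
  | zero => simpa
  | succ n ih =>
    have hlt : T^[n] x < T^[n] y := ih (fun m hm => hagree m (hm.trans (Nat.lt_succ_self n)))
    rw [Function.iterate_succ_apply', Function.iterate_succ_apply']
    exact T_lt_T (iter_nonneg hx n) hlt (branch_iff (hagree n (Nat.lt_succ_self n)))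

lemma digits_ne {x y : ℝ} (hx : 0 ≤ x) (hxy : x < y) : ∃ n, D x n ≠ D y n := by
  by_contra hcon
  push_neg at hcon
  have hlt : ∀ n, T^[n] x < T^[n] y := fun n => iter_lt_iter hx hxy n (fun m _ => hcon m)
  have hgapstep : ∀ n, T^[n] y - T^[n] x ≤ T^[n+1] y - T^[n+1] x := by
    intro n
    rw [Function.iterate_succ_apply', Function.iterate_succ_apply']
    exact T_gap (iter_nonneg hx n) (hlt n) (branch_iff (hcon n))
  have hgapmono : Monotone (fun n => T^[n] y - T^[n] x) := monotone_nat_of_le_succ hgapstep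
  have hdrop : ∀ k : ℕ, ∃ n, (T^[n] y - T^[n] x)⁻¹ ≤ (y - x)⁻¹ - k := by
    intro k
    induction k with
    | zero => exact ⟨0, by simp⟩
    | succ k ih =>
      obtain ⟨n, hn⟩ := ih
      obtain ⟨m, hm, hmlt⟩ := exists_digit_zero hx (n + 1)
      have hmy : T^[m] y < 1 := by
        by_contra hc
        exact absurd ((branch_iff (hcon m)).mpr (not_lt.mp hc)) (not_le.mpr hmlt)
      have hstep : (T^[m+1] y - T^[m+1] x)⁻¹ ≤ (T^[m] y - T^[m] x)⁻¹ - 1 := by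
        rw [Function.iterate_succ_apply', Function.iterate_succ_apply']
        exact T_gap_zero (iter_nonneg hx m) (hlt m) hmy
      have hmono : (T^[m] y - T^[m] x)⁻¹ ≤ (T^[n] y - T^[n] x)⁻¹ := by
        apply inv_anti₀ (by linarith [hlt n])
        exact hgapmono (le_trans (Nat.le_succ n) hm)
      exact ⟨m + 1, by push_cast; linarith⟩
  obtain ⟨k, hk⟩ := exists_nat_gt ((y - x)⁻¹)
  obtain ⟨n, hn⟩ := hdrop k
  have : 0 < (T^[n] y - T^[n] x)⁻¹ := inv_pos.mpr (by linarith [hlt n])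
  linarith

lemma D_eq_zero {x : ℝ} {n : ℕ} (h : T^[n] x < 1) : D x n = 0 := by
  unfold D; rw [if_neg (not_le.mpr h)]

lemma D_eq_one {x : ℝ} {n : ℕ} (h : 1 ≤ T^[n] x) : D x n = 1 := by
  unfold D; rw [if_pos h]

lemma D_term_nonneg (x : ℝ) (n : ℕ) : 0 ≤ D x n / 2 ^ (n + 1) :=
  div_nonneg (D_nonneg x n) (two_pow_pos (n+1)).le

lemma D_term_le (x : ℝ) (n : ℕ) : D x n / 2 ^ (n + 1) ≤ ((1:ℝ)/2) ^ (n + 1) := by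
  calc D x n / 2 ^ (n + 1) ≤ 1 / 2 ^ (n + 1) := by gcongr; exact D_le_one x n
    _ = ((1:ℝ)/2) ^ (n + 1) := by rw [div_pow, one_pow]

lemma tsum_geo_shift (k : ℕ) : ∑' m : ℕ, ((1:ℝ)/2) ^ (m + k) = 2 * (1/2) ^ k := by
  rw [tsum_congr (fun m => pow_add ((1:ℝ)/2) m k), tsum_mul_right, tsum_geometric_two]

lemma summable_geo_shift (k : ℕ) : Summable (fun m : ℕ => ((1:ℝ)/2) ^ (m + k)) := by
  refine (summable_geometric_two.mul_right ((1/2)^k)).congr fun n => ?_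
  rw [pow_add]

lemma H_nonneg (x : ℝ) : 0 ≤ H x := tsum_nonneg (D_term_nonneg x)

lemma H_lt_one {x : ℝ} (hx : 0 ≤ x) : H x < 1 := by
  obtain ⟨j, _, hjlt⟩ := exists_digit_zero hx 0
  have hj0 : D x j = 0 := D_eq_zero hjlt
  have hlt : H x < ∑' n : ℕ, ((1:ℝ)/2) ^ (n + 1) := by
    refine Summable.tsum_lt_tsum (i := j) (fun n => D_term_le x n) ?_ (summable_D x) summable_geo_one
    rw [hj0, zero_div]; positivity
  calc H x < ∑' n : ℕ, ((1:ℝ)/2) ^ (n + 1) := hlt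
    _ = 1 := by rw [tsum_geo_shift 1]; norm_num

lemma H_strict {x y : ℝ} (hx : 0 ≤ x) (hxy : x < y) : H x < H y := by
  classical
  have hex := digits_ne hx hxy
  set n := Nat.find hex with hn
  have hne : D x n ≠ D y n := Nat.find_spec hex
  have hagree : ∀ m, m < n → D x m = D y m := fun m hm => not_not.mp (Nat.find_min hex hm)
  have hun : T^[n] x < T^[n] y := iter_lt_iter hx hxy n hagree
  have hdx : D x n = 0 ∧ D y n = 1 := by
    by_cases h1 : 1 ≤ T^[n] x
    · have h2 : 1 ≤ T^[n] y := le_trans h1 hun.le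
      exact absurd (by unfold D; rw [if_pos h1, if_pos h2]) hne
    · by_cases h2 : 1 ≤ T^[n] y
      · exact ⟨D_eq_zero (not_le.mp h1), D_eq_one h2⟩
      · exact absurd (by unfold D; rw [if_neg h1, if_neg h2]) hne
  have hsx := Summable.sum_add_tsum_nat_add (f := fun m => D x m / 2 ^ (m + 1)) (n+1) (summable_D x)
  have hsy := Summable.sum_add_tsum_nat_add (f := fun m => D y m / 2 ^ (m + 1)) (n+1) (summable_D y)
  have hty : 0 ≤ ∑' m : ℕ, D y (m + (n+1)) / 2 ^ ((m + (n+1)) + 1) :=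
    tsum_nonneg (fun m => D_term_nonneg y _)
  have htx : ∑' m : ℕ, D x (m + (n+1)) / 2 ^ ((m + (n+1)) + 1) < ((1:ℝ)/2) ^ (n + 1) := by
    obtain ⟨j, hj, hjlt⟩ := exists_digit_zero hx (n+1)
    have hj0 : D x j = 0 := D_eq_zero hjlt
    have hsum1 : Summable (fun m : ℕ => D x (m + (n+1)) / 2 ^ ((m + (n+1)) + 1)) :=
      (summable_nat_add_iff (f := fun m => D x m / 2 ^ (m + 1)) (n+1)).mpr (summable_D x)
    have hsum2 : Summable (fun m : ℕ => ((1:ℝ)/2) ^ ((m + (n+1)) + 1)) := by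
      refine (summable_geo_shift (n+2)).congr fun m => ?_
      rw [show m + (n+2) = m + (n+1) + 1 by omega]
    have hlt : ∑' m : ℕ, D x (m + (n+1)) / 2 ^ ((m + (n+1)) + 1)
        < ∑' m : ℕ, ((1:ℝ)/2) ^ ((m + (n+1)) + 1) := by
      refine Summable.tsum_lt_tsum (i := j - (n+1)) (fun m => D_term_le x _) ?_ hsum1 hsum2
      rw [show j - (n+1) + (n+1) = j by omega, hj0, zero_div]; positivity
    calc _ < ∑' m : ℕ, ((1:ℝ)/2) ^ ((m + (n+1)) + 1) := hlt
      _ = ∑' m : ℕ, ((1:ℝ)/2) ^ (m + (n+2)) := tsum_congr fun m => by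
            rw [show m + (n+1) + 1 = m + (n+2) by omega]
      _ = 2 * ((1:ℝ)/2) ^ (n+2) := tsum_geo_shift (n+2)
      _ = ((1:ℝ)/2) ^ (n+1) := by rw [pow_succ]; ring
  have hsum_pref : ∑ m ∈ Finset.range (n+1), D x m / 2 ^ (m+1) + ((1:ℝ)/2) ^ (n+1)
      = ∑ m ∈ Finset.range (n+1), D y m / 2 ^ (m+1) := by
    rw [Finset.sum_range_succ, Finset.sum_range_succ, hdx.1, hdx.2]
    have hpre : ∑ m ∈ Finset.range n, D x m / 2 ^ (m+1)
        = ∑ m ∈ Finset.range n, D y m / 2 ^ (m+1) :=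
      Finset.sum_congr rfl (fun m hm => by rw [hagree m (Finset.mem_range.mp hm)])
    rw [hpre, show ((1:ℝ)/2) ^ (n+1) = 1 / 2 ^ (n+1) by rw [div_pow, one_pow]]
    ring
  unfold H
  rw [← hsx, ← hsy]
  linarith

lemma S_of_ge {t : ℝ} (h : 1/2 ≤ t) : S t = 2*t - 1 := if_pos h
lemma S_of_lt {t : ℝ} (h : ¬ 1/2 ≤ t) : S t = 2*t := if_neg h

lemma S_mem {t : ℝ} (h0 : 0 ≤ t) (h1 : t < 1) : 0 ≤ S t ∧ S t < 1 := by
  unfold S; split_ifs with h <;> constructor <;> linarith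

lemma S_iter_mem {t : ℝ} (h0 : 0 ≤ t) (h1 : t < 1) (n : ℕ) : 0 ≤ S^[n] t ∧ S^[n] t < 1 := by
  induction n with
  | zero => exact ⟨h0, h1⟩
  | succ n ih => rw [Function.iterate_succ_apply']; exact S_mem ih.1 ih.2

lemma E_nonneg (t : ℝ) (n : ℕ) : 0 ≤ E t n := by unfold E; split_ifs <;> norm_num
lemma E_le_one (t : ℝ) (n : ℕ) : E t n ≤ 1 := by unfold E; split_ifs <;> norm_num

lemma E_term_le (t : ℝ) (n : ℕ) : E t n / 2 ^ (n + 1) ≤ ((1:ℝ)/2) ^ (n + 1) := by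
  calc E t n / 2 ^ (n + 1) ≤ 1 / 2 ^ (n + 1) := by gcongr; exact E_le_one t n
    _ = ((1:ℝ)/2) ^ (n + 1) := by rw [div_pow, one_pow]

lemma summable_E (t : ℝ) : Summable (fun n => E t n / 2 ^ (n + 1)) := by
  apply Summable.of_nonneg_of_le
    (fun n => div_nonneg (E_nonneg t n) (two_pow_pos (n+1)).le)
    (fun n => E_term_le t n) summable_geo_one

lemma S_partial {t : ℝ} (n : ℕ) :
    t = (∑ m ∈ Finset.range n, E t m / 2 ^ (m + 1)) + S^[n] t / 2 ^ n := by
  induction n with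
  | zero => simp
  | succ n ih =>
    rw [Finset.sum_range_succ, Function.iterate_succ_apply']
    have hkey : S^[n] t / 2 ^ n = E t n / 2 ^ (n + 1) + S (S^[n] t) / 2 ^ (n + 1) := by
      unfold E
      by_cases h : 1/2 ≤ S^[n] t
      · rw [if_pos h, S_of_ge h, pow_succ]
        field_simp; ring
      · rw [if_neg h, S_of_lt h, pow_succ]
        field_simp; ring
    linarith
 
lemma expansion {t : ℝ} (h0 : 0 ≤ t) (h1 : t < 1) :
    HasSum (fun n => E t n / 2 ^ (n + 1)) t := by
  have hs := (summable_E t).hasSum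
  have htend := hs.tendsto_sum_nat
  have htend2 : Filter.Tendsto (fun n => ∑ m ∈ Finset.range n, E t m / 2 ^ (m + 1))
      Filter.atTop (nhds t) := by
    have heq : ∀ n : ℕ, ∑ m ∈ Finset.range n, E t m / 2 ^ (m + 1) = t - S^[n] t / 2 ^ n :=
      fun n => by linarith [S_partial (t := t) n]
    rw [funext heq]
    have hb : ∀ n : ℕ, S^[n] t / 2 ^ n ≤ ((1:ℝ)/2) ^ n := by
      intro n
      calc S^[n] t / 2 ^ n ≤ 1 / 2 ^ n := by gcongr; exact (S_iter_mem h0 h1 n).2.le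
        _ = ((1:ℝ)/2) ^ n := by rw [div_pow, one_pow]
    have hz : Filter.Tendsto (fun n : ℕ => S^[n] t / 2 ^ n) Filter.atTop (nhds 0) :=
      squeeze_zero (fun n => div_nonneg (S_iter_mem h0 h1 n).1 (two_pow_pos n).le) hb
        (tendsto_pow_atTop_nhds_zero_of_lt_one (by norm_num) (by norm_num))
    simpa using (tendsto_const_nhds (x := t)).sub hz
  have : ∑' n, E t n / 2 ^ (n + 1) = t := tendsto_nhds_unique htend htend2
  rwa [this] at hs

lemma exists_S_zero {t : ℝ} (h0 : 0 ≤ t) (h1 : t < 1) (N : ℕ) :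
    ∃ n, N ≤ n ∧ S^[n] t < 1/2 := by
  by_contra hcon
  push_neg at hcon
  set δ := 1 - S^[N] t with hδ
  have hδpos : 0 < δ := by linarith [(S_iter_mem h0 h1 N).2]
  have key : ∀ k : ℕ, 1 - S^[N + k] t = 2 ^ k * δ := by
    intro k
    induction k with
    | zero => simp [hδ]
    | succ k ih =>
      have hge : 1/2 ≤ S^[N + k] t := hcon _ (Nat.le_add_right _ _)
      have h2 : S^[N + (k+1)] t = S (S^[N + k] t) := by
        rw [← Nat.add_assoc, Function.iterate_succ_apply']
      rw [h2, S_of_ge hge, pow_succ]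
      linarith
  obtain ⟨k, hk⟩ := pow_unbounded_of_one_lt (1/δ) (one_lt_two)
  have h3 := key k
  have h4 : 0 ≤ S^[N + k] t := (S_iter_mem h0 h1 _).1
  have h5 : 1/δ < 2^k := hk
  have h6 : 1 < 2^k * δ := by
    rw [div_lt_iff₀ hδpos] at h5; linarith
  linarith

/-- inverse-branch composition: apply letters k, k+1, ..., k+m-1 (of t's binary word) to 0 -/
def c (t : ℝ) : ℕ → ℕ → ℝ
  | _, 0 => 0
  | k, (m+1) =>
    if 1/2 ≤ S^[k] t then c t (k+1) m + 1 else c t (k+1) m / (c t (k+1) m + 1)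

lemma c_zero (t : ℝ) (k : ℕ) : c t k 0 = 0 := rfl

lemma c_succ (t : ℝ) (k m : ℕ) :
    c t k (m+1) = if 1/2 ≤ S^[k] t then c t (k+1) m + 1
      else c t (k+1) m / (c t (k+1) m + 1) := rfl

lemma c_nonneg (t : ℝ) : ∀ m k, 0 ≤ c t k m := by
  intro m
  induction m with
  | zero => intro k; rw [c_zero]
  | succ m ih =>
    intro k
    rw [c_succ]
    split_ifs
    · linarith [ih (k+1)]
    · exact div_nonneg (ih (k+1)) (by linarith [ih (k+1)])

lemma bmap_mono {a b : ℝ} (ha : 0 ≤ a) (hab : a ≤ b) : a / (a + 1) ≤ b / (b + 1) := by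
  rw [div_le_div_iff₀ (by linarith) (by linarith)]
  nlinarith

lemma c_le_succ (t : ℝ) : ∀ m k, c t k m ≤ c t k (m+1) := by
  intro m
  induction m with
  | zero =>
    intro k; rw [c_zero]
    exact c_nonneg t 1 k
  | succ m ih =>
    intro k
    rw [c_succ, c_succ]
    split_ifs
    · linarith [ih (k+1)]
    · exact bmap_mono (c_nonneg t _ _) (ih (k+1))

lemma c_mono (t : ℝ) (k : ℕ) : Monotone (c t k) :=
  monotone_nat_of_le_succ (c_le_succ t · k)

lemma c_lt_one_of_zero {t : ℝ} {k : ℕ} (h : ¬ 1/2 ≤ S^[k] t) (m : ℕ) : c t k m < 1 := by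
  cases m with
  | zero => rw [c_zero]; norm_num
  | succ m =>
    rw [c_succ, if_neg h]
    exact div_lt_one' (c_nonneg t _ _)

lemma c_bound {t : ℝ} {j : ℕ} (hj : ¬ 1/2 ≤ S^[j] t) :
    ∀ d k, k + d = j → ∀ m, c t k m ≤ (d : ℝ) + 1 := by
  intro d
  induction d with
  | zero =>
    intro k hk m
    rw [Nat.add_zero] at hk; subst hk
    push_cast
    linarith [c_lt_one_of_zero hj m]
  | succ d ih =>
    intro k hk m
    by_cases hdig : 1/2 ≤ S^[k] t
    · cases m with
      | zero => rw [c_zero]; positivity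
      | succ m =>
        rw [c_succ, if_pos hdig]
        have := ih (k+1) (by omega) m
        push_cast
        push_cast at this
        linarith
    · have := c_lt_one_of_zero hdig m
      push_cast
      linarith

lemma c_bddAbove {t : ℝ} (h0 : 0 ≤ t) (h1 : t < 1) (k : ℕ) :
    BddAbove (Set.range (c t k)) := by
  obtain ⟨j, hjk, hjlt⟩ := exists_S_zero h0 h1 k
  refine ⟨(j - k : ℕ) + 1, ?_⟩
  rintro z ⟨m, rfl⟩
  exact c_bound (not_le.mpr hjlt) (j - k) k (by omega) m

/-- candidate preimages: limit of the inverse-branch compositions -/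
def Y (t : ℝ) (k : ℕ) : ℝ := ⨆ m, c t k m

lemma Y_tendsto {t : ℝ} (h0 : 0 ≤ t) (h1 : t < 1) (k : ℕ) :
    Filter.Tendsto (c t k) Filter.atTop (nhds (Y t k)) :=
  tendsto_atTop_ciSup (c_mono t k) (c_bddAbove h0 h1 k)

lemma Y_nonneg {t : ℝ} (h0 : 0 ≤ t) (h1 : t < 1) (k : ℕ) : 0 ≤ Y t k := by
  have := le_ciSup (c_bddAbove h0 h1 k) 0
  rw [c_zero] at this
  exact this

lemma Y_succ {t : ℝ} (h0 : 0 ≤ t) (h1 : t < 1) (k : ℕ) :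
    Y t k = if 1/2 ≤ S^[k] t then Y t (k+1) + 1
      else Y t (k+1) / (Y t (k+1) + 1) := by
  have hY1 := Y_tendsto h0 h1 (k+1)
  have hpos : (0:ℝ) < Y t (k+1) + 1 := by linarith [Y_nonneg h0 h1 (k+1)]
  have hlhs : Filter.Tendsto (fun m => c t k (m+1)) Filter.atTop (nhds (Y t k)) :=
    (Y_tendsto h0 h1 k).comp (Filter.tendsto_add_atTop_nat 1)
  by_cases hdig : 1/2 ≤ S^[k] t
  · rw [if_pos hdig]
    have hrhs : Filter.Tendsto (fun m => c t k (m+1)) Filter.atTop (nhds (Y t (k+1) + 1)) := by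
      have heq : ∀ m, c t k (m+1) = c t (k+1) m + 1 := fun m => by rw [c_succ, if_pos hdig]
      rw [funext heq]
      exact hY1.add tendsto_const_nhds
    exact tendsto_nhds_unique hlhs hrhs
  · rw [if_neg hdig]
    have hrhs : Filter.Tendsto (fun m => c t k (m+1)) Filter.atTop
        (nhds (Y t (k+1) / (Y t (k+1) + 1))) := by
      have heq : ∀ m, c t k (m+1) = c t (k+1) m / (c t (k+1) m + 1) :=
        fun m => by rw [c_succ, if_neg hdig]
      rw [funext heq]
      exact hY1.div (hY1.add tendsto_const_nhds) hpos.ne'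
    exact tendsto_nhds_unique hlhs hrhs

lemma Y_step {t : ℝ} (h0 : 0 ≤ t) (h1 : t < 1) (k : ℕ) :
    T (Y t k) = Y t (k+1) ∧ (1 ≤ Y t k ↔ 1/2 ≤ S^[k] t) := by
  have hY := Y_nonneg h0 h1 (k+1)
  by_cases hdig : 1/2 ≤ S^[k] t
  · have he : Y t k = Y t (k+1) + 1 := by rw [Y_succ h0 h1 k, if_pos hdig]
    constructor
    · rw [he, T_add_one hY]
    · rw [he]; constructor <;> intro <;> [exact hdig; linarith]
  · have he : Y t k = Y t (k+1) / (Y t (k+1) + 1) := by rw [Y_succ h0 h1 k, if_neg hdig]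
    constructor
    · rw [he, T_div hY]
    · rw [he]
      constructor <;> intro h
      · exact absurd h (not_le.mpr (div_lt_one' hY))
      · exact absurd h hdig

lemma Y_iter {t : ℝ} (h0 : 0 ≤ t) (h1 : t < 1) : ∀ n, T^[n] (Y t 0) = Y t n := by
  intro n
  induction n with
  | zero => rfl
  | succ n ih => rw [Function.iterate_succ_apply', ih, (Y_step h0 h1 n).1]

lemma H_surj_aux {t : ℝ} (h0 : 0 ≤ t) (h1 : t < 1) : 0 ≤ Y t 0 ∧ H (Y t 0) = t := by
  refine ⟨Y_nonneg h0 h1 0, ?_⟩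
  have hD : ∀ n, D (Y t 0) n = E t n := by
    intro n
    have h2 : T^[n] (Y t 0) = Y t n := Y_iter h0 h1 n
    have hb := (Y_step h0 h1 n).2
    unfold D E
    rw [h2]
    by_cases hdig : 1/2 ≤ S^[n] t
    · rw [if_pos (hb.mpr hdig), if_pos hdig]
    · rw [if_neg (fun h => hdig (hb.mp h)), if_neg hdig]
  unfold H
  rw [tsum_congr (fun n => by rw [hD n])]
  exact (expansion h0 h1).tsum_eq

end MQM
end

noncomputable section
namespace MQM

/-- the packaged question-mark function -/
def Hfun : Set.Ici (0:ℝ) → Set.Ico (0:ℝ) 1 :=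
  fun x => ⟨H x, H_nonneg x, H_lt_one x.2⟩

lemma Hfun_strictMono : StrictMono Hfun := by
  intro a b hab
  exact Subtype.mk_lt_mk.mpr (H_strict a.2 (Subtype.coe_lt_coe.mpr hab))

lemma Hfun_surjective : Function.Surjective Hfun := by
  rintro ⟨t, ht0, ht1⟩
  exact ⟨⟨Y t 0, (H_surj_aux ht0 ht1).1⟩, Subtype.ext (H_surj_aux ht0 ht1).2⟩

lemma Hfun_minkowskiLike : MinkowskiLike Hfun := by
  refine ⟨Hfun_strictMono, ⟨Hfun_strictMono.injective, Hfun_surjective⟩, fun x hx => ?_⟩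
  exact ⟨H_add_one hx, H_div hx⟩

section Unique

variable {g : Set.Ici (0:ℝ) → Set.Ico (0:ℝ) 1}

/-- the real-valued version of a candidate map -/
def wf (g : Set.Ici (0:ℝ) → Set.Ico (0:ℝ) 1) (x : ℝ) : ℝ :=
  if hx : 0 ≤ x then (g ⟨x, hx⟩ : ℝ) else 0

lemma wf_eq (g : Set.Ici (0:ℝ) → Set.Ico (0:ℝ) 1) {x : ℝ} (hx : 0 ≤ x) :
    wf g x = (g ⟨x, hx⟩ : ℝ) := dif_pos hx

lemma wf_mem {x : ℝ} (hx : 0 ≤ x) : 0 ≤ wf g x ∧ wf g x < 1 := by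
  rw [wf_eq g hx]; exact (g ⟨x, hx⟩).2

lemma wf_fe1 (hg : MinkowskiLike g) {x : ℝ} (hx : 0 ≤ x) :
    wf g (x + 1) = (1 + wf g x) / 2 := by
  rw [wf_eq g (by linarith), wf_eq g hx]
  exact (hg.2.2 x hx).1

lemma wf_fe2 (hg : MinkowskiLike g) {x : ℝ} (hx : 0 ≤ x) :
    wf g (x / (x + 1)) = wf g x / 2 := by
  rw [wf_eq g (div_nonneg hx (by linarith)), wf_eq g hx]
  exact (hg.2.2 x hx).2

lemma wf_zero (hg : MinkowskiLike g) : wf g 0 = 0 := by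
  have h := wf_fe2 hg (le_refl (0:ℝ))
  rw [show (0:ℝ) / (0 + 1) = 0 by norm_num] at h
  linarith

lemma wf_step (hg : MinkowskiLike g) {x : ℝ} (hx : 0 ≤ x) :
    S (wf g x) = wf g (T x) ∧ (1/2 ≤ wf g x ↔ 1 ≤ x) := by
  by_cases h1 : 1 ≤ x
  · have hx' : 0 ≤ x - 1 := by linarith
    have h := wf_fe1 hg hx'
    rw [show x - 1 + 1 = x by ring] at h
    have hge : 1/2 ≤ wf g x := by
      have := (wf_mem (g := g) hx').1; rw [h]; linarith
    refine ⟨?_, iff_of_true hge h1⟩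
    rw [S_of_ge hge, T_of_ge h1, h]; ring
  · push_neg at h1
    have h1x : 0 < 1 - x := by linarith
    have hy0 : 0 ≤ x / (1 - x) := div_nonneg hx h1x.le
    have hyx : (x / (1 - x)) / (x / (1 - x) + 1) = x := by
      rw [div_add' _ _ _ h1x.ne', show x + 1 * (1 - x) = 1 by ring, div_div_div_eq]
      field_simp
    have h := wf_fe2 hg hy0
    rw [hyx] at h
    have hlt : wf g x < 1/2 := by
      have := (wf_mem (g := g) hy0).2; rw [h]; linarith
    refine ⟨?_, iff_of_false (not_le.mpr hlt) (not_le.mpr h1)⟩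
    rw [S_of_lt (not_le.mpr hlt), T_of_lt (not_le.mpr h1), h]; ring

lemma wf_iter (hg : MinkowskiLike g) {x : ℝ} (hx : 0 ≤ x) (n : ℕ) :
    S^[n] (wf g x) = wf g (T^[n] x) := by
  induction n with
  | zero => rfl
  | succ n ih =>
    rw [Function.iterate_succ_apply', Function.iterate_succ_apply', ih,
      (wf_step hg (iter_nonneg hx n)).1]

lemma wf_digit (hg : MinkowskiLike g) {x : ℝ} (hx : 0 ≤ x) (n : ℕ) :
    E (wf g x) n = D x n := by
  unfold E D
  rw [wf_iter hg hx n]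
  have hb := (wf_step hg (iter_nonneg hx n)).2
  by_cases h : 1 ≤ T^[n] x
  · rw [if_pos (hb.mpr h), if_pos h]
  · rw [if_neg (fun hc => h (hb.mp hc)), if_neg h]

lemma wf_eq_H (hg : MinkowskiLike g) {x : ℝ} (hx : 0 ≤ x) : wf g x = H x := by
  have hm := wf_mem (g := g) hx
  have hexp := (expansion hm.1 hm.2).tsum_eq
  unfold H
  rw [← hexp]
  exact (tsum_congr fun n => by rw [wf_digit hg hx n]).symm

lemma eq_Hfun (hg : MinkowskiLike g) : g = Hfun := by
  funext a
  obtain ⟨x, hx⟩ := a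
  apply Subtype.ext
  have h1 : (g ⟨x, hx⟩ : ℝ) = wf g x := (wf_eq g hx).symm
  have h2 : (Hfun ⟨x, hx⟩ : ℝ) = H x := rfl
  rw [h1, h2, wf_eq_H hg hx]

end Unique
end MQM
end

/-- There is a unique strictly increasing bijection `h : [0,∞) → [0,1)` with
`h(x+1) = (1+h(x))/2` and `h(x/(x+1)) = h(x)/2`; moreover this `h` is a
homeomorphism onto `[0,1)` and satisfies `h(0) = 0`.  (Minkowski's question
mark function.) -/
theorem minkowski_question_mark :
    (∃! h : Set.Ici (0:ℝ) → Set.Ico (0:ℝ) 1, MinkowskiLike h) ∧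
    (∀ h : Set.Ici (0:ℝ) → Set.Ico (0:ℝ) 1, MinkowskiLike h →
      IsHomeomorph h ∧ (h ⟨0, Set.mem_Ici.mpr le_rfl⟩ : ℝ) = 0) := by
  constructor
  · exact ⟨MQM.Hfun, MQM.Hfun_minkowskiLike, fun g hg => MQM.eq_Hfun hg⟩
  · intro h hh
    constructor
    · have he : ⇑((StrictMono.orderIsoOfSurjective h hh.1 hh.2.1.2).toHomeomorph) = h := by
        rw [OrderIso.coe_toHomeomorph, StrictMono.coe_orderIsoOfSurjective]
      exact he ▸ (StrictMono.orderIsoOfSurjective h hh.1 hh.2.1.2).toHomeomorph.isHomeomorph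
    · have h0 := MQM.wf_zero hh
      rw [MQM.wf_eq h (le_refl (0:ℝ))] at h0
      exact h0
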